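/- Let D be a database instance in which all tuples are endogenous, and let Σ be a finite set of denial constraints with associated monotone violation queries V^ψ (each with ¬V^ψ(∅)). If D′ is an S-repair of D w.r.t. Σ, then for every ψ ∈ Σ that is violated by D (i.e., D ⊨ V^ψ), the set D∖D′ contains an actual cause for V^ψ, i.e., (D∖D′) ∩ CS(D, ∅, V^ψ) ≠ ∅. Consequently D∖D′ is a hitting set of the collection { CS(D, ∅, V^ψ) : ψ ∈ Σ, D ⊨ V^ψ }. -/
import Mathlib


/-- `t` is an actual cause for query `Q` in instance `D` with endogenous part `Dn`. -/
def IsCause {U : Type*} [DecidableEq U] (D Dn : Finset U) (Q : Finset U → Prop) (t : U) : Prop :=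
  t ∈ Dn ∧ ∃ Γ ⊆ Dn, t ∉ Γ ∧ Q (D \ Γ) ∧ ¬ Q (D \ insert t Γ)

/-- `D'` is an S-repair of `D` w.r.t. a finite set of denial constraints, given by their
violation queries `V i` for `i` in the index set `Sig`. -/
def IsSRepairSet {U : Type*} [DecidableEq U] {ι : Type*} (D : Finset U) (Sig : Finset ι)
    (V : ι → Finset U → Prop) (D' : Finset U) : Prop :=
  D' ⊆ D ∧ (∀ i ∈ Sig, ¬ V i D') ∧
    ∀ D'' ⊆ D, (∀ i ∈ Sig, ¬ V i D'') → D' ⊆ D'' → D'' = D'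

/-- If `D'` is an S-repair of `D` w.r.t. a set `Σ` of denial constraints, then for every
violated constraint `ψ ∈ Σ` (i.e. `D ⊨ V^ψ`), the difference `D ∖ D'` contains an actual
cause for `V^ψ`; consequently `D ∖ D'` is a hitting set of the collection
`{ CS(D, ∅, V^ψ) : ψ ∈ Σ, D ⊨ V^ψ }`. -/
theorem SRepair_difference_hits_causes
    {U : Type*} [DecidableEq U] {ι : Type*} (D : Finset U) (Sig : Finset ι)
    (V : ι → Finset U → Prop)
    (hmono : ∀ i ∈ Sig, ∀ S S' : Finset U, S ⊆ S' → V i S → V i S')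
    (hempty : ∀ i ∈ Sig, ¬ V i ∅)
    (D' : Finset U) (hrep : IsSRepairSet D Sig V D') :
    (∀ i ∈ Sig, V i D → ∃ t ∈ D \ D', IsCause D D (V i) t) ∧
    (∀ C ∈ { C : Set U | ∃ i ∈ Sig, V i D ∧ C = { t | IsCause D D (V i) t } },
      ∃ x ∈ C, x ∈ D \ D') := by
  classical
  obtain ⟨hsub, hsat, _hmax⟩ := hrep
  have key : ∀ i ∈ Sig, V i D → ∃ t ∈ D \ D', IsCause D D (V i) t := by
    intro i hi hVD
    have hex : ∃ n, ∃ S : Finset U, (D' ⊆ S ∧ S ⊆ D ∧ V i S) ∧ S.card = n :=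
      ⟨D.card, D, ⟨hsub, Finset.Subset.refl D, hVD⟩, rfl⟩
    obtain ⟨S, ⟨hD'S, hSD, hVS⟩, hcard⟩ := Nat.find_spec hex
    have hSne : S ≠ D' := fun h => hsat i hi (h ▸ hVS)
    have hts : ∃ t, t ∈ S ∧ t ∉ D' := by
      by_contra h; push_neg at h
      exact hSne (Finset.Subset.antisymm h hD'S)
    obtain ⟨t, htS, htD'⟩ := hts
    refine ⟨t, Finset.mem_sdiff.mpr ⟨hSD htS, htD'⟩, hSD htS, D \ S, Finset.sdiff_subset,
      ?_, ?_, ?_⟩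
    · simp [htS]
    · rw [Finset.sdiff_sdiff_eq_self hSD]; exact hVS
    · have heq : D \ insert t (D \ S) = S.erase t := by
        ext x
        simp only [Finset.mem_sdiff, Finset.mem_insert, Finset.mem_erase, not_or,
          not_and, not_not]
        constructor
        · rintro ⟨hxD, hxt, hxS⟩; exact ⟨hxt, hxS hxD⟩
        · rintro ⟨hxt, hxS⟩; exact ⟨hSD hxS, hxt, fun _ => hxS⟩
      rw [heq]
      intro hV
      have hlt : (S.erase t).card < Nat.find hex := by
        rw [← hcard]; exact Finset.card_erase_lt_of_mem htS
      exact Nat.find_min hex hlt ⟨S.erase t,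
        ⟨fun x hx => Finset.mem_erase.mpr ⟨fun h => htD' (h ▸ hx), hD'S hx⟩,
         (Finset.erase_subset t S).trans hSD, hV⟩, rfl⟩
  refine ⟨key, ?_⟩
  rintro C ⟨i, hi, hVD, rfl⟩
  obtain ⟨t, htm, htc⟩ := key i hi hVD
  exact ⟨t, htc, htm⟩
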